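/- arXiv:math/9404211 — 2 statements merged into one kernel-verified Lean document; each statement's English description precedes it below -/
import Mathlib

section
/- For all Banach spaces E and F and every bounded linear operator S : E → F, one has β_W(S) = ω(S*) = β_W(S**), where S* and S** denote the adjoint and the second adjoint of S. -/
open NormedSpace Metric Pointwise Filter

noncomputable section

variable (𝕜 : Type*) [RCLike 𝕜]

/-- A Banach space over `𝕜`, bundled. -/
structure BanachPkg where
  carrier : Type
  [inst1 : NormedAddCommGroup carrier]
  [inst2 : NormedSpace 𝕜 carrier]
  [inst3 : CompleteSpace carrier]

attribute [instance] BanachPkg.inst1 BanachPkg.inst2 BanachPkg.inst3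

variable {𝕜}

section Defs

variable {E F : Type*} [SeminormedAddCommGroup E] [NormedSpace 𝕜 E]
  [SeminormedAddCommGroup F] [NormedSpace 𝕜 F]

/-- A continuous linear operator is weakly compact if the image of the closed unit
ball is relatively compact in the weak topology. -/
def WCompact (T : E →L[𝕜] F) : Prop :=
  IsCompact (closure ((toWeakSpace 𝕜 F) '' (T '' closedBall 0 1)))

/-- The Banach-space adjoint of a continuous linear operator. -/
def dualOp (S : E →L[𝕜] F) : StrongDual 𝕜 F →L[𝕜] StrongDual 𝕜 E :=
  (ContinuousLinearMap.compL 𝕜 E F 𝕜).flip S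

@[simp] theorem dualOp_apply (S : E →L[𝕜] F) (f : StrongDual 𝕜 F) (x : E) :
    dualOp S f x = f (S x) := rfl

/-- The second adjoint `S** : E** → F**`. -/
def bidualOp (S : E →L[𝕜] F) : StrongDual 𝕜 (StrongDual 𝕜 E) →L[𝕜] StrongDual 𝕜 (StrongDual 𝕜 F) :=
  dualOp (dualOp S)

end Defs

/-- The bidual of a normed space. -/
abbrev Bidual (𝕜 : Type*) [RCLike 𝕜] (E : Type*) [SeminormedAddCommGroup E]
    [NormedSpace 𝕜 E] : Type _ :=
  StrongDual 𝕜 (StrongDual 𝕜 E)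

/-- The quotient `E**/E` of the bidual by the canonical image of `E`. -/
abbrev BidualQuot (𝕜 : Type*) [RCLike 𝕜] (E : Type*) [NormedAddCommGroup E]
    [NormedSpace 𝕜 E] : Type _ :=
  @HasQuotient.Quotient (Bidual 𝕜 E) (Submodule 𝕜 (Bidual 𝕜 E))
    (@Submodule.hasQuotient 𝕜 (Bidual 𝕜 E) _ _ _)
    (LinearMap.range (inclusionInDoubleDual 𝕜 E : E →ₗ[𝕜] Bidual 𝕜 E))

section Defs3

variable {E F : Type*} [NormedAddCommGroup E] [NormedSpace 𝕜 E]
  [NormedAddCommGroup F] [NormedSpace 𝕜 F]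

/-- `RS` is the operator `R(S) : E**/E → F**/F` induced by `S`, i.e. it satisfies
`R(S)(x** + E) = S** x** + F`  (`R(S) = 0` iff `S` is weakly compact). -/
def IsRRep (S : E →L[𝕜] F) (RS : BidualQuot 𝕜 E →L[𝕜] BidualQuot 𝕜 F) : Prop :=
  ∀ u : Bidual 𝕜 E,
    RS (Submodule.Quotient.mk u) = Submodule.Quotient.mk (bidualOp S u)

end Defs3

section Quant

variable {E F : Type*} [NormedAddCommGroup E] [NormedSpace ℝ E]
  [NormedAddCommGroup F] [NormedSpace ℝ F]

/-- The measure of weak noncompactness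
`ω(S) = inf {ε > 0 : S B_E ⊆ T B_Z + ε B_F, Z Banach, T ∈ W(Z,F)}`. -/
def omegaW (S : E →L[ℝ] F) : ℝ :=
  sInf {ε : ℝ | 0 < ε ∧ ∃ (Z : BanachPkg ℝ) (T : Z.carrier →L[ℝ] F),
    WCompact T ∧ S '' closedBall 0 1 ⊆ T '' closedBall 0 1 + closedBall 0 ε}

/-- The measure of weak noncompactness
`β_W(S) = inf {ε > 0 : ∃ Z Banach, T ∈ W(E,Z), ‖Sx‖ ≤ ‖Tx‖ + ε‖x‖ ∀ x}`. -/
def betaW (S : E →L[ℝ] F) : ℝ :=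
  sInf {ε : ℝ | 0 < ε ∧ ∃ (Z : BanachPkg ℝ) (T : E →L[ℝ] Z.carrier),
    WCompact T ∧ ∀ x : E, ‖S x‖ ≤ ‖T x‖ + ε * ‖x‖}

end Quant

section AuxLemmas

open Set NormedSpace Metric Topology

/-- Operator norm bound from a bound on the closed unit ball. -/
theorem myOpNorm_le {X : Type*} [NormedAddCommGroup X] [NormedSpace ℝ X]
    (ψ : X →L[ℝ] ℝ) {C : ℝ} (hC : 0 ≤ C) (h : ∀ x : X, ‖x‖ ≤ 1 → ‖ψ x‖ ≤ C) : ‖ψ‖ ≤ C := by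
  refine ψ.opNorm_le_bound hC fun x => ?_
  rcases eq_or_ne x 0 with rfl | hx
  · simp
  · have hxn : 0 < ‖x‖ := norm_pos_iff.mpr hx
    have h1 : ‖ψ ((‖x‖)⁻¹ • x)‖ ≤ C := by
      refine h _ ?_
      rw [norm_smul, norm_inv, norm_norm, inv_mul_cancel₀ hxn.ne']
    rw [map_smul, norm_smul, norm_inv, norm_norm] at h1
    have h2 : ‖x‖ * ((‖x‖)⁻¹ * ‖ψ x‖) ≤ ‖x‖ * C :=
      mul_le_mul_of_nonneg_left h1 hxn.le
    rw [← mul_assoc, mul_inv_cancel₀ hxn.ne', one_mul] at h2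
    linarith [h2]

instance weakDual_locallyConvex (X : Type*) [NormedAddCommGroup X] [NormedSpace ℝ X] :
    LocallyConvexSpace ℝ (WeakDual ℝ X) :=
  WeakBilin.locallyConvexSpace

instance weakSpace_dual_t2 (X : Type*) [NormedAddCommGroup X] [NormedSpace ℝ X] :
    T2Space (WeakSpace ℝ (StrongDual ℝ X)) := by
  refine ⟨fun f g hfg => ?_⟩
  have h2 : ∃ z : X, ((toWeakSpace ℝ (StrongDual ℝ X)).symm f) z ≠ ((toWeakSpace ℝ (StrongDual ℝ X)).symm g) z := by
    by_contra h
    push_neg at h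
    exact hfg ((toWeakSpace ℝ (StrongDual ℝ X)).symm.injective (ContinuousLinearMap.ext h))
  obtain ⟨z, hz⟩ := h2
  exact separated_by_continuous
    (WeakBilin.eval_continuous ((topDualPairing ℝ (StrongDual ℝ X)).flip)
      (inclusionInDoubleDual ℝ X z)) hz

/-- Every continuous linear functional on the weak-* topology is evaluation at a point. -/
theorem weakDual_clm_eval {X : Type*} [NormedAddCommGroup X] [NormedSpace ℝ X]
    (φ : WeakDual ℝ X →L[ℝ] ℝ) : ∃ x : X, ∀ f : WeakDual ℝ X, φ f = f x := by
  classical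
  have h0 : φ ⁻¹' Metric.ball (0 : ℝ) 1 ∈ 𝓝 (0 : WeakDual ℝ X) := by
    have hb : Metric.ball (0 : ℝ) 1 ∈ 𝓝 (φ 0) := by
      rw [map_zero]; exact Metric.ball_mem_nhds _ one_pos
    exact (φ.continuous.continuousAt (x := 0)).preimage_mem_nhds hb
  have hbasis : (𝓝 (0 : WeakDual ℝ X)).HasBasis
      ((topDualPairing ℝ X).toSeminormFamily.basisSets) _root_.id :=
    LinearMap.hasBasis_weakBilin (topDualPairing ℝ X)
  rw [hbasis.mem_iff] at h0
  obtain ⟨U, hU, hUsub⟩ := h0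
  obtain ⟨I, r, hr, rfl⟩ := (SeminormFamily.basisSets_iff _).1 hU
  have hker : ∀ f : WeakDual ℝ X, (∀ x ∈ I, f x = 0) → φ f = 0 := by
    intro f hf
    by_contra hne
    have hc : ∀ c : ℝ, |c| * |φ f| < 1 := by
      intro c
      have hmem : (c • f) ∈ Seminorm.ball (I.sup ((topDualPairing ℝ X).toSeminormFamily)) 0 r := by
        refine (Seminorm.mem_ball_zero _).2 ?_
        refine Seminorm.finset_sup_apply_lt hr fun i hi => ?_
        show ‖c * f i‖ < r
        rw [hf i hi, mul_zero, norm_zero]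
        exact hr
      have := hUsub hmem
      simpa [Real.norm_eq_abs, abs_mul] using this
    have h2 := hc (2 / φ f)
    rw [abs_div, div_mul_cancel₀ _ (abs_ne_zero.2 hne)] at h2
    norm_num at h2
  set L : {x // x ∈ I} → (WeakDual ℝ X →ₗ[ℝ] ℝ) :=
    fun i => ((topDualPairing ℝ X).flip (i : X)) with hL
  have hK : ⨅ i, LinearMap.ker (L i) ≤ LinearMap.ker (φ : WeakDual ℝ X →ₗ[ℝ] ℝ) := by
    intro f hf
    simp only [Submodule.mem_iInf, LinearMap.mem_ker] at hf ⊢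
    exact hker f fun x hx => hf ⟨x, hx⟩
  obtain ⟨c, hc⟩ := (Submodule.mem_span_range_iff_exists_fun ℝ).1 (mem_span_of_iInf_ker_le_ker hK)
  refine ⟨∑ i : {x // x ∈ I}, c i • (i : X), fun f => ?_⟩
  have h1 := LinearMap.ext_iff.1 hc f
  simp only [LinearMap.coe_sum, Finset.sum_apply, LinearMap.smul_apply, smul_eq_mul] at h1
  have h2 : f (∑ i : {x // x ∈ I}, c i • (i : X)) = ∑ i : {x // x ∈ I}, c i * f i := by
    rw [map_sum]
    refine Finset.sum_congr rfl fun i _ => ?_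
    rw [map_smul, smul_eq_mul]
  rw [h2]
  exact (h1.symm : φ f = _).trans (Finset.sum_congr rfl fun i _ => rfl)

section Gold

open Set NormedSpace Metric Topology

variable {X Z F : Type*} [NormedAddCommGroup X] [NormedSpace ℝ X]
  [NormedAddCommGroup Z] [NormedSpace ℝ Z] [NormedAddCommGroup F] [NormedSpace ℝ F]

/-- **Goldstine's theorem**: the image of the unit ball of `X` is weak-* dense in the unit
ball of the bidual. -/
theorem my_goldstine {u : StrongDual ℝ (StrongDual ℝ X)} (hu : ‖u‖ ≤ 1) :
    StrongDual.toWeakDual u ∈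
      closure ((fun z : X => StrongDual.toWeakDual (inclusionInDoubleDual ℝ X z)) ''
        closedBall 0 1) := by
  by_contra hmem
  have hconv : Convex ℝ (closure ((fun z : X => StrongDual.toWeakDual (inclusionInDoubleDual ℝ X z)) ''
      closedBall 0 1)) := by
    have h0 : (fun z : X => StrongDual.toWeakDual (inclusionInDoubleDual ℝ X z)) =
        ⇑(((StrongDual.toWeakDual :
            StrongDual ℝ (StrongDual ℝ X) ≃ₗ[ℝ] WeakDual ℝ (StrongDual ℝ X)) :
            StrongDual ℝ (StrongDual ℝ X) →ₗ[ℝ] WeakDual ℝ (StrongDual ℝ X)) ∘ₗ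
          ((inclusionInDoubleDual ℝ X : X →L[ℝ] StrongDual ℝ (StrongDual ℝ X)) :
            X →ₗ[ℝ] StrongDual ℝ (StrongDual ℝ X))) := rfl
    have h1 : Convex ℝ ((fun z : X => StrongDual.toWeakDual (inclusionInDoubleDual ℝ X z)) ''
        closedBall 0 1) := by
      rw [h0]
      exact (convex_closedBall (0 : X) 1).linear_image _
    exact h1.closure
  obtain ⟨φ, s, hφu, hs⟩ := geometric_hahn_banach_point_closed hconv isClosed_closure hmem
  obtain ⟨f, hf⟩ := weakDual_clm_eval φ
  have hball : ∀ z : X, ‖z‖ ≤ 1 → s < f z := by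
    intro z hz
    have hmem' : StrongDual.toWeakDual (inclusionInDoubleDual ℝ X z) ∈
        closure ((fun z : X => StrongDual.toWeakDual (inclusionInDoubleDual ℝ X z)) ''
          closedBall 0 1) :=
      subset_closure (Set.mem_image_of_mem _ (mem_closedBall_zero_iff.2 hz))
    have h1 := hs _ hmem'
    rw [hf] at h1
    exact h1
  have hs0 : s < 0 := by simpa using hball 0 (by simp)
  have hfnorm : ‖f‖ ≤ -s := by
    refine myOpNorm_le f (by linarith) fun z hz => ?_
    have h1 := hball z hz
    have h2 := hball (-z) (by simpa using hz)
    rw [map_neg] at h2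
    rw [Real.norm_eq_abs, abs_le]
    constructor <;> linarith
  have habs : |u f| ≤ -s := by
    calc |u f| ≤ ‖u‖ * ‖f‖ := u.le_opNorm f
    _ ≤ 1 * (-s) := mul_le_mul hu hfnorm (norm_nonneg _) zero_le_one
    _ = -s := one_mul _
  have h3 : φ (StrongDual.toWeakDual u) = u f := hf _
  have h4 := (abs_le.1 habs).1
  rw [h3] at hφu
  linarith

@[simp]
theorem bidualOp_inclusion (T : Z →L[ℝ] F) (z : Z) :
    bidualOp T (inclusionInDoubleDual ℝ Z z) = inclusionInDoubleDual ℝ F (T z) :=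
  ContinuousLinearMap.ext fun _ => rfl

/-- The bidual of a weakly compact operator maps into the canonical image of `F`. -/
theorem wcompact_bidual_mem_range (T : Z →L[ℝ] F) (hT : WCompact T)
    (u : Bidual ℝ Z) : ∃ y : F, bidualOp T u = inclusionInDoubleDual ℝ F y := by
  suffices h : ∀ v : Bidual ℝ Z, ‖v‖ ≤ 1 → ∃ y : F,
      bidualOp T v = inclusionInDoubleDual ℝ F y by
    rcases eq_or_ne u 0 with rfl | hu
    · exact ⟨0, by simp⟩
    · have hn : (0:ℝ) < ‖u‖ := (norm_nonneg u).lt_of_ne'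
        (fun h => hu ((ContinuousLinearMap.opNorm_zero_iff u).1 h))
      obtain ⟨y, hy⟩ := h ((‖u‖)⁻¹ • u)
        (by rw [@norm_smul _ _ _ _ _ (@NormedSpace.toNormSMulClass ℝ (Bidual ℝ Z) _ _ inferInstance), norm_inv, Real.norm_of_nonneg hn.le, inv_mul_cancel₀ hn.ne'])
      refine ⟨‖u‖ • y, ?_⟩
      have h2 : bidualOp T u = ‖u‖ • bidualOp T ((‖u‖)⁻¹ • u) := by
        rw [← map_smul, smul_smul, mul_inv_cancel₀ hn.ne', one_smul]
      rw [h2, hy, ← map_smul]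
  intro v hv
  have hK : IsCompact (closure ((toWeakSpace ℝ F) '' (T '' closedBall 0 1))) := hT
  set j : WeakSpace ℝ F → WeakDual ℝ (StrongDual ℝ F) :=
    fun x => StrongDual.toWeakDual (inclusionInDoubleDual ℝ F ((toWeakSpace ℝ F).symm x)) with hj
  have hjcont : Continuous j := by
    apply WeakDual.continuous_of_continuous_eval
    intro g
    exact WeakBilin.eval_continuous ((topDualPairing ℝ F).flip) g
  have hjK : IsCompact (j '' closure ((toWeakSpace ℝ F) '' (T '' closedBall 0 1))) :=
    hK.image hjcont
  have hKcl : IsClosed (j '' closure ((toWeakSpace ℝ F) '' (T '' closedBall 0 1))) :=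
    hjK.isClosed
  set Γ : WeakDual ℝ (StrongDual ℝ Z) → WeakDual ℝ (StrongDual ℝ F) :=
    fun w => StrongDual.toWeakDual (bidualOp T (WeakDual.toStrongDual w)) with hΓ
  have hΓcont : Continuous Γ := by
    apply WeakDual.continuous_of_continuous_eval
    intro g
    exact WeakDual.eval_continuous (dualOp T g)
  have hgold := my_goldstine (X := Z) hv
  have h1 : Γ (StrongDual.toWeakDual v) ∈
      closure (Γ '' ((fun z : Z => StrongDual.toWeakDual (inclusionInDoubleDual ℝ Z z)) ''
        closedBall 0 1)) :=
    image_closure_subset_closure_image hΓcont (Set.mem_image_of_mem _ hgold)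
  have h2 : Γ '' ((fun z : Z => StrongDual.toWeakDual (inclusionInDoubleDual ℝ Z z)) ''
      closedBall 0 1) ⊆ j '' closure ((toWeakSpace ℝ F) '' (T '' closedBall 0 1)) := by
    rintro - ⟨-, ⟨z, hz, rfl⟩, rfl⟩
    refine ⟨toWeakSpace ℝ F (T z),
      subset_closure ⟨T z, ⟨z, hz, rfl⟩, rfl⟩, ?_⟩
    show StrongDual.toWeakDual (inclusionInDoubleDual ℝ F
      ((toWeakSpace ℝ F).symm (toWeakSpace ℝ F (T z)))) = _
    rw [LinearEquiv.symm_apply_apply]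
    show StrongDual.toWeakDual (inclusionInDoubleDual ℝ F (T z)) =
      StrongDual.toWeakDual (bidualOp T (inclusionInDoubleDual ℝ Z z))
    rw [bidualOp_inclusion]
  have h3 : Γ (StrongDual.toWeakDual v) ∈
      j '' closure ((toWeakSpace ℝ F) '' (T '' closedBall 0 1)) :=
    closure_minimal h2 hKcl h1
  obtain ⟨x, _, hx⟩ := h3
  refine ⟨(toWeakSpace ℝ F).symm x, ?_⟩
  have h4 : StrongDual.toWeakDual (inclusionInDoubleDual ℝ F ((toWeakSpace ℝ F).symm x)) =
      StrongDual.toWeakDual (bidualOp T v) := hx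
  exact ((StrongDual.toWeakDual.injective h4)).symm

/-- **Gantmacher's theorem** (one direction): the adjoint of a weakly compact operator is
weakly compact. -/
theorem wcompact_dualOp {T : Z →L[ℝ] F} (hT : WCompact T) : WCompact (dualOp T) := by
  set g : WeakDual ℝ F → WeakSpace ℝ (StrongDual ℝ Z) :=
    fun f => toWeakSpace ℝ (StrongDual ℝ Z) (dualOp T (WeakDual.toStrongDual f)) with hg
  have hgcont : Continuous g := by
    apply WeakBilin.continuous_of_continuous_eval
    intro u
    obtain ⟨y, hy⟩ := wcompact_bidual_mem_range T hT u
    have h1 : (fun f : WeakDual ℝ F => ((topDualPairing ℝ (StrongDual ℝ Z)).flip (g f)) u)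
        = fun f : WeakDual ℝ F => f y := by
      funext f
      show u (dualOp T (WeakDual.toStrongDual f)) = f y
      have h2 : u (dualOp T (WeakDual.toStrongDual f)) =
          (bidualOp T u) (WeakDual.toStrongDual f) := rfl
      rw [h2, hy]
      rfl
    rw [h1]
    exact WeakDual.eval_continuous y
  have hcpt : IsCompact (g '' (WeakDual.toStrongDual ⁻¹' closedBall 0 1)) :=
    (WeakDual.isCompact_closedBall (0 : StrongDual ℝ F) 1).image hgcont
  refine IsCompact.of_isClosed_subset hcpt isClosed_closure (closure_minimal ?_ hcpt.isClosed)
  rintro - ⟨-, ⟨f, hf, rfl⟩, rfl⟩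
  exact ⟨StrongDual.toWeakDual f, by simpa using hf, rfl⟩

/-- Weak compactness is preserved by precomposition with a norm-nonincreasing operator. -/
theorem wcompact_comp {G Z' F' : Type*} [SeminormedAddCommGroup G] [NormedSpace ℝ G]
    [SeminormedAddCommGroup Z'] [NormedSpace ℝ Z'] [SeminormedAddCommGroup F']
    [NormedSpace ℝ F']
    {T : Z' →L[ℝ] F'} (hT : WCompact T) (A : G →L[ℝ] Z') (hA : ∀ x, ‖A x‖ ≤ ‖x‖) :
    WCompact (T.comp A) := by
  refine IsCompact.of_isClosed_subset hT isClosed_closure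
    (closure_mono (Set.image_mono ?_))
  rintro - ⟨x, hx, rfl⟩
  exact ⟨A x, mem_closedBall_zero_iff.2 ((hA x).trans (mem_closedBall_zero_iff.1 hx)), rfl⟩

end Gold

section HB

open Set NormedSpace Metric

variable {E Z F : Type*} [NormedAddCommGroup E] [NormedSpace ℝ E]
  [NormedAddCommGroup Z] [NormedSpace ℝ Z] [NormedAddCommGroup F] [NormedSpace ℝ F]

/-- Hahn–Banach decomposition: if `‖Sx‖ ≤ ‖Tx‖ + ε‖x‖` then every `S* f` with `‖f‖ ≤ 1`
decomposes as `T* g + h` with `‖g‖ ≤ 1`, `‖h‖ ≤ ε`. -/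
theorem exists_dual_decomposition (S : E →L[ℝ] F) (T : E →L[ℝ] Z)
    {ε : ℝ} (hε : 0 ≤ ε) (hd : ∀ x, ‖S x‖ ≤ ‖T x‖ + ε * ‖x‖) {f : StrongDual ℝ F} (hf : ‖f‖ ≤ 1) :
    ∃ (g : StrongDual ℝ Z) (h : StrongDual ℝ E), ‖g‖ ≤ 1 ∧ ‖h‖ ≤ ε ∧ dualOp S f = dualOp T g + h := by
  classical
  set L : E →ₗ[ℝ] Z × E := LinearMap.prod (T : E →ₗ[ℝ] Z) LinearMap.id with hLdef
  set pm : (Z × E) →ₗ.[ℝ] ℝ :=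
    ⟨LinearMap.range L,
      ((f.comp S : E →L[ℝ] ℝ) : E →ₗ[ℝ] ℝ) ∘ₗ
        ((LinearMap.snd ℝ Z E) ∘ₗ (LinearMap.range L).subtype)⟩ with hpm
  set N : Z × E → ℝ := fun p => ‖p.1‖ + ε * ‖p.2‖ with hN
  have hNhom : ∀ c : ℝ, 0 < c → ∀ p, N (c • p) = c * N p := by
    intro c hc p
    show ‖c • p.1‖ + ε * ‖c • p.2‖ = c * (‖p.1‖ + ε * ‖p.2‖)
    rw [norm_smul, norm_smul, Real.norm_eq_abs, abs_of_pos hc]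
    ring
  have hNadd : ∀ p q, N (p + q) ≤ N p + N q := by
    intro p q
    have h1 : ‖p.1 + q.1‖ ≤ ‖p.1‖ + ‖q.1‖ := norm_add_le _ _
    have h2 : ‖p.2 + q.2‖ ≤ ‖p.2‖ + ‖q.2‖ := norm_add_le _ _
    have h3 := mul_le_mul_of_nonneg_left h2 hε
    show ‖p.1 + q.1‖ + ε * ‖p.2 + q.2‖ ≤ (‖p.1‖ + ε * ‖p.2‖) + (‖q.1‖ + ε * ‖q.2‖)
    nlinarith
  have hbound : ∀ v : pm.domain, pm v ≤ N v := by
    rintro ⟨v, x, hx⟩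
    show f (S v.2) ≤ N v
    have hv1 : v.1 = T v.2 := by rw [← hx]; rfl
    calc f (S v.2) ≤ ‖f (S v.2)‖ := le_abs_self _
    _ ≤ ‖f‖ * ‖S v.2‖ := f.le_opNorm _
    _ ≤ 1 * ‖S v.2‖ := mul_le_mul_of_nonneg_right hf (norm_nonneg _)
    _ = ‖S v.2‖ := one_mul _
    _ ≤ ‖T v.2‖ + ε * ‖v.2‖ := hd v.2
    _ = N v := by show _ = ‖v.1‖ + ε * ‖v.2‖; rw [hv1]
  obtain ⟨ψ, hψ₁, hψ₂⟩ := exists_extension_of_le_sublinear pm N hNhom hNadd hbound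
  have hψabs : ∀ p, |ψ p| ≤ N p := by
    intro p
    rcases abs_cases (ψ p) with ⟨h1, _⟩ | ⟨h1, _⟩
    · rw [h1]; exact hψ₂ p
    · rw [h1]
      have h2 := hψ₂ (-p)
      rw [map_neg] at h2
      have hNn : N (-p) = N p := by
        show ‖(-p).1‖ + ε * ‖(-p).2‖ = ‖p.1‖ + ε * ‖p.2‖
        rw [Prod.fst_neg, Prod.snd_neg, norm_neg, norm_neg]
      linarith
  set g₀ : Z →ₗ[ℝ] ℝ := ψ ∘ₗ LinearMap.inl ℝ Z E with hg₀
  set h₀ : E →ₗ[ℝ] ℝ := ψ ∘ₗ LinearMap.inr ℝ Z E with hh₀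
  have hg₀b : ∀ z, ‖g₀ z‖ ≤ 1 * ‖z‖ := by
    intro z
    rw [one_mul, Real.norm_eq_abs]
    have h5 := hψabs (z, 0)
    simpa [hN, hg₀] using h5
  have hh₀b : ∀ x, ‖h₀ x‖ ≤ ε * ‖x‖ := by
    intro x
    rw [Real.norm_eq_abs]
    have h5 := hψabs (0, x)
    simpa [hN, hh₀] using h5
  refine ⟨g₀.mkContinuous 1 hg₀b, h₀.mkContinuous ε hh₀b,
    g₀.mkContinuous_norm_le zero_le_one hg₀b, h₀.mkContinuous_norm_le hε hh₀b, ?_⟩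
  ext x
  show f (S x) = g₀ (T x) + h₀ x
  have hsum : ((T x, (0:E)) : Z × E) + ((0:Z), x) = (T x, x) := by simp
  have h4 : g₀ (T x) + h₀ x = ψ (T x, x) := by
    show ψ (T x, 0) + ψ (0, x) = _
    rw [← map_add, hsum]
  have h5 : ψ (T x, x) = f (S x) := hψ₁ ⟨(T x, x), ⟨x, rfl⟩⟩
  rw [h4, h5]

end HB

end AuxLemmas

/-- For all Banach spaces `E`, `F` and every `S ∈ L(E,F)`:
`β_W(S) = ω(S*) = β_W(S**)`. -/
theorem betaW_eq_omegaW_dual_eq_betaW_bidual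
    {E F : Type*} [NormedAddCommGroup E] [NormedSpace ℝ E] [CompleteSpace E]
    [NormedAddCommGroup F] [NormedSpace ℝ F] [CompleteSpace F]
    (S : E →L[ℝ] F) :
    betaW S = omegaW (dualOp S) ∧
    omegaW (dualOp S) = betaW (E := Bidual ℝ E) (F := Bidual ℝ F) (bidualOp S) := by
  have h1 : {ε : ℝ | 0 < ε ∧ ∃ (Z : BanachPkg ℝ) (T : E →L[ℝ] Z.carrier),
      WCompact T ∧ ∀ x : E, ‖S x‖ ≤ ‖T x‖ + ε * ‖x‖} ⊆
      {ε : ℝ | 0 < ε ∧ ∃ (Z : BanachPkg ℝ) (T : Z.carrier →L[ℝ] StrongDual ℝ E),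
      WCompact T ∧ dualOp S '' closedBall 0 1 ⊆ T '' closedBall 0 1 + closedBall 0 ε} := by
    rintro ε ⟨hε, Z, T, hT, hb⟩
    refine ⟨hε, ⟨StrongDual ℝ Z.carrier⟩, dualOp T, wcompact_dualOp hT, ?_⟩
    rintro - ⟨f, hf, rfl⟩
    obtain ⟨g, h, hg, hh, heq⟩ :=
      exists_dual_decomposition S T hε.le hb (mem_closedBall_zero_iff.1 hf)
    rw [heq]
    exact Set.add_mem_add ⟨g, mem_closedBall_zero_iff.2 hg, rfl⟩ (mem_closedBall_zero_iff.2 hh)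
  have h2 : {ε : ℝ | 0 < ε ∧ ∃ (Z : BanachPkg ℝ) (T : Z.carrier →L[ℝ] StrongDual ℝ E),
      WCompact T ∧ dualOp S '' closedBall 0 1 ⊆ T '' closedBall 0 1 + closedBall 0 ε} ⊆
      {ε : ℝ | 0 < ε ∧ ∃ (Z : BanachPkg ℝ) (T : Bidual ℝ E →L[ℝ] Z.carrier),
      WCompact (𝕜 := ℝ) (E := Bidual ℝ E) (F := Z.carrier) T ∧ ∀ u : Bidual ℝ E, ‖bidualOp S u‖ ≤ ‖T u‖ + ε * ‖u‖} := by
    rintro ε ⟨hε, Z, T, hT, hsub⟩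
    refine ⟨hε, ⟨StrongDual ℝ Z.carrier⟩, dualOp T, wcompact_dualOp hT, fun u => ?_⟩
    have hM : (0:ℝ) ≤ ‖dualOp T u‖ + ε * ‖u‖ := by positivity
    refine myOpNorm_le _ hM fun f hf1 => ?_
    have hmem := hsub (Set.mem_image_of_mem _ (mem_closedBall_zero_iff.2 hf1))
    obtain ⟨a, ha, b, hb, hab⟩ := Set.mem_add.1 hmem
    have hh1 : (bidualOp S u) f = u (dualOp S f) := rfl
    rw [hh1, ← hab, map_add]
    obtain ⟨z, hz, rfl⟩ := ha
    have h3 : ‖u (T z)‖ ≤ ‖dualOp T u‖ := by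
      have h2' : u (T z) = (dualOp T u) z := rfl
      rw [h2']
      calc ‖(dualOp T u) z‖ ≤ ‖dualOp T u‖ * ‖z‖ := (dualOp T u).le_opNorm z
      _ ≤ ‖dualOp T u‖ * 1 :=
        mul_le_mul_of_nonneg_left (mem_closedBall_zero_iff.1 hz) (norm_nonneg _)
      _ = _ := mul_one _
    have h4 : ‖u b‖ ≤ ε * ‖u‖ := by
      calc ‖u b‖ ≤ ‖u‖ * ‖b‖ := u.le_opNorm b
      _ ≤ ‖u‖ * ε :=
        mul_le_mul_of_nonneg_left (mem_closedBall_zero_iff.1 hb) (ContinuousLinearMap.opNorm_nonneg u)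
      _ = ε * ‖u‖ := mul_comm _ _
    calc ‖u (T z) + u b‖ ≤ ‖u (T z)‖ + ‖u b‖ := norm_add_le _ _
    _ ≤ ‖dualOp T u‖ + ε * ‖u‖ := add_le_add h3 h4
  have h3 : {ε : ℝ | 0 < ε ∧ ∃ (Z : BanachPkg ℝ) (T : Bidual ℝ E →L[ℝ] Z.carrier),
      WCompact (𝕜 := ℝ) (E := Bidual ℝ E) (F := Z.carrier) T ∧ ∀ u : Bidual ℝ E, ‖bidualOp S u‖ ≤ ‖T u‖ + ε * ‖u‖} ⊆
      {ε : ℝ | 0 < ε ∧ ∃ (Z : BanachPkg ℝ) (T : E →L[ℝ] Z.carrier),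
      WCompact T ∧ ∀ x : E, ‖S x‖ ≤ ‖T x‖ + ε * ‖x‖} := by
    rintro ε ⟨hε, Z, T, hT, hb⟩
    have hW : WCompact (T.comp (inclusionInDoubleDual ℝ E)) :=
      wcompact_comp hT (inclusionInDoubleDual ℝ E) (fun x => double_dual_bound ℝ E x)
    refine ⟨hε, Z, T.comp (inclusionInDoubleDual ℝ E), hW, fun x => ?_⟩
    have hx1 : ‖S x‖ = ‖bidualOp S (inclusionInDoubleDual ℝ E x)‖ := by
      rw [bidualOp_inclusion]
      exact ((inclusionInDoubleDualLi ℝ (E := F)).norm_map (S x)).symm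
    have hx2 : ‖inclusionInDoubleDual ℝ E x‖ = ‖x‖ :=
      (inclusionInDoubleDualLi ℝ (E := E)).norm_map x
    calc ‖S x‖ = ‖bidualOp S (inclusionInDoubleDual ℝ E x)‖ := hx1
    _ ≤ ‖T (inclusionInDoubleDual ℝ E x)‖ + ε * ‖inclusionInDoubleDual ℝ E x‖ := hb _
    _ = ‖(T.comp (inclusionInDoubleDual ℝ E)) x‖ + ε * ‖x‖ := by rw [hx2]; rfl
  exact ⟨congrArg sInf (Set.Subset.antisymm h1 (h2.trans h3)),
    congrArg sInf (Set.Subset.antisymm h2 (h3.trans h1))⟩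


end
end

section
/- Let n be a positive integer and S = (s_ij) a real n×n matrix. Let ℓ₂ⁿ(ℓ₁ⁿ) denote the space of n-tuples (y_1,…,y_n) with each y_j ∈ ℝⁿ equipped with the ℓ¹-norm, and where the norm of (y_1,…,y_n) is the ℓ²-norm of (‖y_1‖_1,…,‖y_n‖_1). Define the operator S̃ on ℓ₂ⁿ(ℓ₁ⁿ) by S̃(y_1,…,y_n) = (∑_{j=1}^n s_{1j} y_j, …, ∑_{j=1}^n s_{nj} y_j). Then the operator norm of S̃ equals ‖S‖_r, where ‖S‖_r denotes the operator norm on the Euclidean space ℓ₂ⁿ of the matrix (|s_ij|) of absolute values. -/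
noncomputable section

/-- The space `ℓ₂ⁿ(ℓ₁ⁿ)`: `n`-tuples of vectors of `ℝⁿ` with the `ℓ¹`-norm, normed by the
`ℓ²`-norm of the tuple of `ℓ¹`-norms. -/
abbrev EllTwoOne (n : ℕ) := PiLp 2 (fun _ : Fin n => PiLp 1 fun _ : Fin n => ℝ)

/-- The operator `S̃(y₁,…,yₙ) = (∑ⱼ s₁ⱼ yⱼ, …, ∑ⱼ sₙⱼ yⱼ)` on `ℓ₂ⁿ(ℓ₁ⁿ)`. -/
def matrixTilde {n : ℕ} (S : Matrix (Fin n) (Fin n) ℝ) :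
    EllTwoOne n →L[ℝ] EllTwoOne n :=
  haveI : ContinuousSMul ℝ (EllTwoOne n) := IsBoundedSMul.continuousSMul
  LinearMap.toContinuousLinearMap
    { toFun := fun y => WithLp.toLp 2 fun i => ∑ j, S i j • y j
      map_add' := fun y z => by
        apply WithLp.ofLp_injective
        funext i
        simp [smul_add, Finset.sum_add_distrib]
      map_smul' := fun c y => by
        apply WithLp.ofLp_injective
        funext i
        simp [Finset.smul_sum, smul_comm c] }

/-- The regular norm `‖S‖_r` of a real `n×n` matrix: the operator norm on the Euclidean
space `ℓ₂ⁿ` of the matrix `(|s_ij|)` of absolute values. -/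
def regularNorm {n : ℕ} (S : Matrix (Fin n) (Fin n) ℝ) : ℝ :=
  ‖LinearMap.toContinuousLinearMap (Matrix.toEuclideanLin (S.map fun a => |a|))‖

lemma l1norm {n : ℕ} (x : PiLp 1 fun _ : Fin n => ℝ) : ‖x‖ = ∑ i, |x i| := by
  rw [PiLp.norm_eq_sum (by norm_num : (0:ℝ) < (1 : ENNReal).toReal)]
  simp [Real.norm_eq_abs]

lemma tilde_apply {n : ℕ} (S : Matrix (Fin n) (Fin n) ℝ) (y : EllTwoOne n) (i : Fin n) :
    matrixTilde S y i = ∑ j, S i j • y j := rfl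

/-- The operator norm of `S̃` on `ℓ₂ⁿ(ℓ₁ⁿ)` equals the regular norm `‖S‖_r`. -/
theorem norm_matrixTilde_eq_regularNorm {n : ℕ} (hn : 0 < n)
    (S : Matrix (Fin n) (Fin n) ℝ) :
    ‖matrixTilde S‖ = regularNorm S := by
  set A := LinearMap.toContinuousLinearMap (Matrix.toEuclideanLin (S.map fun a => |a|)) with hA
  have hAapp : ∀ (v : EuclideanSpace ℝ (Fin n)) (i : Fin n),
      A v i = ∑ j, |S i j| * v j := by
    intro v i
    simp [hA, Matrix.toEuclideanLin_apply, Matrix.mulVec, dotProduct, Matrix.map_apply]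
  rw [regularNorm, ← hA]
  apply le_antisymm
  · apply ContinuousLinearMap.opNorm_le_bound _ (norm_nonneg A)
    intro y
    set v : EuclideanSpace ℝ (Fin n) := WithLp.toLp 2 (fun j => ‖y j‖) with hv
    have hvnorm : ‖v‖ = ‖y‖ := by
      rw [EuclideanSpace.norm_eq, PiLp.norm_eq_of_L2]
      congr 1
      refine Finset.sum_congr rfl fun j _ => ?_
      rw [hv]; simp
    have h1 : ‖matrixTilde S y‖ ≤ ‖A v‖ := by
      rw [PiLp.norm_eq_of_L2, PiLp.norm_eq_of_L2]
      apply Real.sqrt_le_sqrt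
      apply Finset.sum_le_sum
      intro i _
      have hle : ‖matrixTilde S y i‖ ≤ A v i := by
        rw [hAapp, tilde_apply]
        calc ‖∑ j, S i j • y j‖ ≤ ∑ j, ‖S i j • y j‖ := norm_sum_le _ _
          _ = ∑ j, |S i j| * ‖y j‖ := by
              refine Finset.sum_congr rfl fun j _ => ?_
              rw [norm_smul, Real.norm_eq_abs]
          _ = ∑ j, |S i j| * v j := rfl
      calc ‖matrixTilde S y i‖ ^ 2 ≤ (A v i) ^ 2 :=
            pow_le_pow_left₀ (norm_nonneg _) hle 2
        _ = ‖A v i‖ ^ 2 := by rw [Real.norm_eq_abs, sq_abs]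
    calc ‖matrixTilde S y‖ ≤ ‖A v‖ := h1
      _ ≤ ‖A‖ * ‖v‖ := A.le_opNorm v
      _ = ‖A‖ * ‖y‖ := by rw [hvnorm]
  · apply ContinuousLinearMap.opNorm_le_bound _ (norm_nonneg _)
    intro v
    set y : EllTwoOne n := WithLp.toLp 2 (fun j => WithLp.toLp 1 (fun k => if k = j then |v j| else 0)) with hy
    have hyj : ∀ j, ‖y j‖ = |v j| := by
      intro j
      rw [l1norm]
      simp only [hy]
      rw [Finset.sum_eq_single j]
      · simp
      · intro b _ hb; simp [hb]
      · intro h; exact absurd (Finset.mem_univ j) h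
    have hynorm : ‖y‖ = ‖v‖ := by
      rw [PiLp.norm_eq_of_L2, EuclideanSpace.norm_eq]
      congr 1
      refine Finset.sum_congr rfl fun j _ => ?_
      rw [hyj, Real.norm_eq_abs]
    have hT : ∀ i, ‖matrixTilde S y i‖ = ∑ j, |S i j| * |v j| := by
      intro i
      have hk : ∀ k, matrixTilde S y i k = S i k * |v k| := by
        intro k
        rw [tilde_apply]
        have h1 : (∑ j, S i j • y j) k = ∑ j, S i j * y j k := by
          rw [WithLp.ofLp_sum,
            Finset.sum_apply]
          rfl
        rw [h1]
        simp only [hy]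
        rw [Finset.sum_eq_single k]
        · simp
        · intro b _ hb; simp [Ne.symm hb]
        · intro h; exact absurd (Finset.mem_univ k) h
      rw [l1norm]
      refine Finset.sum_congr rfl fun k _ => ?_
      rw [hk, abs_mul, abs_abs]
    have h2 : ‖A v‖ ≤ ‖matrixTilde S y‖ := by
      rw [PiLp.norm_eq_of_L2, PiLp.norm_eq_of_L2]
      apply Real.sqrt_le_sqrt
      apply Finset.sum_le_sum
      intro i _
      have hle : ‖A v i‖ ≤ ‖matrixTilde S y i‖ := by
        rw [hT i, hAapp, Real.norm_eq_abs]
        calc |∑ j, |S i j| * v j| ≤ ∑ j, |(|S i j| * v j)| := Finset.abs_sum_le_sum_abs _ _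
          _ = ∑ j, |S i j| * |v j| := by
              refine Finset.sum_congr rfl fun j _ => ?_
              rw [abs_mul, abs_abs]
      exact pow_le_pow_left₀ (norm_nonneg _) hle 2
    calc ‖A v‖ ≤ ‖matrixTilde S y‖ := h2
      _ ≤ ‖matrixTilde S‖ * ‖y‖ := (matrixTilde S).le_opNorm y
      _ = ‖matrixTilde S‖ * ‖v‖ := by rw [hynorm]

end
end
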